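/- Let A be a symmetric real n×n matrix such that diag(A) = c·(A·𝟏) for some real number c, where 𝟏 is the all-one vector and diag(A) ∈ ℝⁿ is the vector of diagonal entries of A. Then the (n+1)×(n+1) block matrix R(A) := [[1, diag(A)ᵀ],[diag(A), A]] is positive semidefinite if and only if A is positive semidefinite and 𝟏ᵀA𝟏 ≥ (tr A)². -/

import Mathlib

open Matrix

/-- For a real `n×n` matrix `A` with diagonal vector `a = diag(A)`, the bordered matrix
`R(A) = [[1, aᵀ],[a, A]]`. -/
def Rmat {n : ℕ} (A : Matrix (Fin n) (Fin n) ℝ) :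
    Matrix (Fin 1 ⊕ Fin n) (Fin 1 ⊕ Fin n) ℝ :=
  Matrix.fromBlocks
    (Matrix.of fun _ _ => (1 : ℝ))
    (Matrix.of fun _ j => A.diag j)
    (Matrix.of fun i _ => A.diag i)
    A

lemma symm_dot {n : ℕ} {A : Matrix (Fin n) (Fin n) ℝ} (hsym : A.IsSymm)
    (u v : Fin n → ℝ) : u ⬝ᵥ A *ᵥ v = v ⬝ᵥ A *ᵥ u := by
  rw [dotProduct_mulVec, ← Matrix.mulVec_transpose, hsym.eq, dotProduct_comm]

lemma psd_nonneg {n : ℕ} {A : Matrix (Fin n) (Fin n) ℝ} (hA : A.PosSemidef)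
    (x : Fin n → ℝ) : 0 ≤ x ⬝ᵥ A *ᵥ x := by
  simpa using hA.dotProduct_mulVec_nonneg x

/-- Cauchy–Schwarz inequality for a real positive semidefinite matrix. -/
lemma psd_cauchy_schwarz {n : ℕ} {A : Matrix (Fin n) (Fin n) ℝ} (hA : A.PosSemidef)
    (hsym : A.IsSymm) (x y : Fin n → ℝ) :
    (x ⬝ᵥ A *ᵥ y) ^ 2 ≤ (x ⬝ᵥ A *ᵥ x) * (y ⬝ᵥ A *ᵥ y) := by
  have key : ∀ t : ℝ, 0 ≤ (y ⬝ᵥ A *ᵥ y) * (t * t) + (2 * (x ⬝ᵥ A *ᵥ y)) * t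
      + (x ⬝ᵥ A *ᵥ x) := by
    intro t
    have h := psd_nonneg hA (x + t • y)
    have expand : (x + t • y) ⬝ᵥ A *ᵥ (x + t • y)
        = (y ⬝ᵥ A *ᵥ y) * (t * t) + (2 * (x ⬝ᵥ A *ᵥ y)) * t + (x ⬝ᵥ A *ᵥ x) := by
      rw [mulVec_add, mulVec_smul, dotProduct_add, add_dotProduct, add_dotProduct,
        dotProduct_smul, smul_dotProduct, smul_dotProduct, dotProduct_smul,
        symm_dot hsym y x]
      simp only [smul_eq_mul]
      ring
    linarith [expand ▸ h]
  have hd := discrim_le_zero key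
  rw [discrim] at hd
  nlinarith [hd]

/-- if `A` is symmetric with `diag(A) = c·(A𝟙)` for some real `c`, then
`R(A)` is positive semidefinite iff `A` is positive semidefinite and `𝟙ᵀA𝟙 ≥ (tr A)²`. -/
theorem statement5 (n : ℕ) (A : Matrix (Fin n) (Fin n) ℝ) (hsym : A.IsSymm)
    (c : ℝ) (hdiag : A.diag = c • (A *ᵥ fun _ => (1 : ℝ))) :
    (Rmat A).PosSemidef ↔ A.PosSemidef ∧ (A.trace) ^ 2 ≤ ∑ i, ∑ j, A i j := by
  classical
  set a : Fin n → ℝ := A.diag with ha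
  set o : Fin n → ℝ := fun _ => (1 : ℝ) with ho
  set B : Matrix (Fin 1) (Fin n) ℝ := Matrix.of fun _ j => a j with hB
  -- rewrite Rmat using fromBlocks with conjTranspose
  have hC : (Matrix.of fun i (_ : Fin 1) => a i) = Bᴴ := by
    ext i j
    simp [hB, Matrix.conjTranspose_apply]
  have hOne : (Matrix.of fun (_ : Fin 1) (_ : Fin 1) => (1 : ℝ))
      = (1 : Matrix (Fin 1) (Fin 1) ℝ) := by
    ext i j
    rw [Subsingleton.elim i j]
    simp
  have hR : Rmat A = Matrix.fromBlocks (1 : Matrix (Fin 1) (Fin 1) ℝ) B Bᴴ A := by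
    rw [Rmat, hC, hOne]
  haveI : Invertible (1 : Matrix (Fin 1) (Fin 1) ℝ) := invertibleOne
  have hschur := Matrix.PosDef.fromBlocks₁₁ B A Matrix.PosDef.one
  rw [hR, hschur, inv_one, Matrix.mul_one]
  -- the product Bᴴ * B is the outer product of a with itself
  have hBB : Bᴴ * B = Matrix.of fun i j => a i * a j := by
    ext i j
    simp [hB, Matrix.mul_apply, Matrix.conjTranspose_apply]
  rw [hBB]
  -- quadratic form of the Schur complement
  have hquad : ∀ x : Fin n → ℝ,
      x ⬝ᵥ (A - Matrix.of fun i j => a i * a j) *ᵥ x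
        = x ⬝ᵥ A *ᵥ x - (a ⬝ᵥ x) ^ 2 := by
    intro x
    rw [Matrix.sub_mulVec, dotProduct_sub]
    congr 1
    have : (Matrix.of fun i j => a i * a j) *ᵥ x = (a ⬝ᵥ x) • a := by
      ext i
      simp only [Matrix.mulVec, dotProduct, Matrix.of_apply, Pi.smul_apply, smul_eq_mul,
        Finset.mul_sum]
      rw [Finset.sum_mul]
      exact Finset.sum_congr rfl fun j _ => by ring
    rw [this, dotProduct_smul, smul_eq_mul, dotProduct_comm, sq]
  -- the key scalar facts
  have hS : o ⬝ᵥ A *ᵥ o = ∑ i, ∑ j, A i j := by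
    simp [dotProduct, Matrix.mulVec, ho]
  have htrace : A.trace = a ⬝ᵥ o := by
    simp [Matrix.trace, dotProduct, ho, ha, Matrix.diag]
  have haDot : ∀ x : Fin n → ℝ, a ⬝ᵥ x = c * (o ⬝ᵥ A *ᵥ x) := by
    intro x
    rw [hdiag]
    rw [smul_dotProduct, smul_eq_mul, dotProduct_mulVec, ← Matrix.mulVec_transpose,
      hsym.eq, dotProduct_comm, dotProduct_mulVec]
  have hHermOuter : (Matrix.of fun i j => a i * a j : Matrix (Fin n) (Fin n) ℝ).IsHermitian := by
    ext i j
    simp [Matrix.conjTranspose_apply, mul_comm]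
  have hHermA : A.IsHermitian := by
    ext i j
    simpa [Matrix.conjTranspose_apply] using congrFun (congrFun hsym i) j
  constructor
  · intro hM
    have hAps : A.PosSemidef := by
      refine .of_dotProduct_mulVec_nonneg hHermA fun x => ?_
      have h1 := psd_nonneg hM x
      rw [hquad x] at h1
      simp only [star_trivial]
      nlinarith [sq_nonneg (a ⬝ᵥ x)]
    refine ⟨hAps, ?_⟩
    have h1 := psd_nonneg hM o
    rw [hquad o] at h1
    rw [htrace, ← hS]
    linarith
  · rintro ⟨hAps, htr⟩
    refine .of_dotProduct_mulVec_nonneg (hHermA.sub hHermOuter) fun x => ?_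
    simp only [star_trivial]
    rw [hquad x]
    -- need (a ⬝ᵥ x)^2 ≤ x ⬝ᵥ A *ᵥ x
    have hq := psd_nonneg hAps x
    have hSnn : 0 ≤ o ⬝ᵥ A *ᵥ o := psd_nonneg hAps o
    have hcs := psd_cauchy_schwarz hAps hsym o x
    have htr' : (a ⬝ᵥ o) ^ 2 ≤ o ⬝ᵥ A *ᵥ o := by
      rw [← htrace, hS]; exact htr
    have hax : (a ⬝ᵥ x) ^ 2 = c ^ 2 * (o ⬝ᵥ A *ᵥ x) ^ 2 := by
      rw [haDot x]; ring
    have hao : a ⬝ᵥ o = c * (o ⬝ᵥ A *ᵥ o) := haDot o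
    rcases eq_or_lt_of_le hSnn with hS0 | hSpos
    · -- S = 0 case: Cauchy-Schwarz forces o ⬝ᵥ A *ᵥ x = 0
      have : (o ⬝ᵥ A *ᵥ x) ^ 2 ≤ 0 := by
        calc (o ⬝ᵥ A *ᵥ x) ^ 2 ≤ (o ⬝ᵥ A *ᵥ o) * (x ⬝ᵥ A *ᵥ x) := hcs
        _ = 0 := by rw [← hS0]; ring
      have hzero : o ⬝ᵥ A *ᵥ x = 0 := by nlinarith [sq_nonneg (o ⬝ᵥ A *ᵥ x)]
      rw [hax, hzero]
      simpa using hq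
    · -- S > 0 case
      have hc2S : c ^ 2 * (o ⬝ᵥ A *ᵥ o) ≤ 1 := by
        rw [hao] at htr'
        have : c ^ 2 * (o ⬝ᵥ A *ᵥ o) ^ 2 ≤ o ⬝ᵥ A *ᵥ o := by nlinarith
        nlinarith
      have h1 : (a ⬝ᵥ x) ^ 2 ≤ c ^ 2 * (o ⬝ᵥ A *ᵥ o) * (x ⬝ᵥ A *ᵥ x) := by
        rw [hax]
        calc c ^ 2 * (o ⬝ᵥ A *ᵥ x) ^ 2
            ≤ c ^ 2 * ((o ⬝ᵥ A *ᵥ o) * (x ⬝ᵥ A *ᵥ x)) :=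
              mul_le_mul_of_nonneg_left hcs (sq_nonneg c)
        _ = c ^ 2 * (o ⬝ᵥ A *ᵥ o) * (x ⬝ᵥ A *ᵥ x) := by ring
      have h2 : c ^ 2 * (o ⬝ᵥ A *ᵥ o) * (x ⬝ᵥ A *ᵥ x) ≤ x ⬝ᵥ A *ᵥ x :=
        mul_le_of_le_one_left hq hc2S
      linarith
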